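/- For all integers 2 ≤ i ≤ j ≤ n, the group homomorphism J_n^{i,j} → J_n defined on generators by s_{p,q} ↦ s_{p,q} is injective. -/

import Mathlib

/-- The set of intervals `[p,q]`, `1 ≤ p < q ≤ n`, indexing the generators `s_{p,q}`
of the cactus group `J_n`. -/
def cactusSet (n : ℕ) : Set (ℕ × ℕ) := {pq | 1 ≤ pq.1 ∧ pq.1 < pq.2 ∧ pq.2 ≤ n}

/-- The defining relations (j1)-(j3) of the cactus group, restricted to a collection `C`
of generating intervals: exactly those cactus relations involving only generators from `C`. -/
def cactusRels (C : Set (ℕ × ℕ)) : Set (FreeGroup C) :=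
  {w | (∃ a : C, w = FreeGroup.of a * FreeGroup.of a) ∨
    (∃ a b : C, (a.1.2 < b.1.1 ∨ b.1.2 < a.1.1) ∧
      w = FreeGroup.of a * FreeGroup.of b * (FreeGroup.of a)⁻¹ * (FreeGroup.of b)⁻¹) ∨
    (∃ a b c : C, a.1.1 ≤ b.1.1 ∧ b.1.2 ≤ a.1.2 ∧
      c.1.1 = a.1.1 + a.1.2 - b.1.2 ∧ c.1.2 = a.1.1 + a.1.2 - b.1.1 ∧
      w = FreeGroup.of a * FreeGroup.of b * (FreeGroup.of a)⁻¹ * (FreeGroup.of c)⁻¹)}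

/-- The group presented by the generators `s_I`, `I ∈ C`, and those cactus relations
involving only these generators. -/
abbrev PartialCactusGroup (C : Set (ℕ × ℕ)) := PresentedGroup (cactusRels C)

/-- The cactus group `J_n`. -/
abbrev CactusGroup (n : ℕ) := PartialCactusGroup (cactusSet n)

/-- The generating intervals of `J_n^{i,j}`: those `[p,q]` whose leaf number `q-p+1`
lies between `i` and `j`. -/
def sliceSet (n i j : ℕ) : Set (ℕ × ℕ) :=
  {pq | pq ∈ cactusSet n ∧ i ≤ pq.2 - pq.1 + 1 ∧ pq.2 - pq.1 + 1 ≤ j}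

/-- The group `J_n^{i,j}`, presented by the generators `s_{p,q}` with `i ≤ q-p+1 ≤ j` and those
cactus relations involving only such generators. -/
abbrev SliceCactusGroup (n i j : ℕ) := PartialCactusGroup (sliceSet n i j)

namespace CactusAux

def Valid (b : ℕ × ℕ) : Prop := 1 ≤ b.1 ∧ b.1 < b.2
def Sub (c b : ℕ × ℕ) : Prop := b.1 ≤ c.1 ∧ c.2 ≤ b.2
def Disj (c b : ℕ × ℕ) : Prop := c.2 < b.1 ∨ b.2 < c.1
def flip (b c : ℕ × ℕ) : ℕ × ℕ := (b.1 + b.2 - c.2, b.1 + b.2 - c.1)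

instance (c b : ℕ × ℕ) : Decidable (Sub c b) := by unfold Sub; infer_instance
instance (c b : ℕ × ℕ) : Decidable (Disj c b) := by unfold Disj; infer_instance

lemma sub_refl (b : ℕ × ℕ) : Sub b b := ⟨le_refl _, le_refl _⟩
lemma sub_trans {a b c : ℕ × ℕ} (h1 : Sub a b) (h2 : Sub b c) : Sub a c := by
  unfold Sub at *; omega
lemma flip_valid {b c : ℕ × ℕ} (hb : Valid b) (hc : Valid c) (h : Sub c b) :
    Valid (flip b c) := by unfold Valid Sub flip at *; simp at *; omega
lemma flip_sub {b c : ℕ × ℕ} (hb : Valid b) (hc : Valid c) (h : Sub c b) :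
    Sub (flip b c) b := by unfold Valid Sub flip at *; simp at *; omega
lemma flip_flip {b c : ℕ × ℕ} (hb : Valid b) (hc : Valid c) (h : Sub c b) :
    flip b (flip b c) = c := by
  unfold Valid Sub flip at *; rw [Prod.ext_iff]; simp at *; constructor <;> omega
lemma flip_eq_top {b c : ℕ × ℕ} (hb : Valid b) (hc : Valid c) (h : Sub c b)
    (he : flip b c = b) : c = b := by
  unfold Valid Sub flip at *; rw [Prod.ext_iff] at *; simp at *; omega
lemma sub_len_lt {a b : ℕ × ℕ} (ha : Valid a) (hb : Valid b) (h : Sub a b) (hne : a ≠ b) :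
    a.2 - a.1 < b.2 - b.1 := by
  unfold Valid Sub at *; simp only [Ne, Prod.ext_iff] at hne; omega
lemma flip_mono {a b c : ℕ × ℕ} (hb : Valid b) (hc : Valid c) (h1 : Sub c b) (h2 : Sub b a) :
    Sub (flip a c) (flip a b) := by unfold Valid Sub flip at *; simp at *; omega
lemma flip_flip_comp {a b c : ℕ × ℕ} (ha : Valid a) (hb : Valid b) (hc : Valid c)
    (h1 : Sub c b) (h2 : Sub b a) :
    flip (flip a b) (flip a c) = flip a (flip b c) := by
  unfold Valid Sub flip at *; simp at *; constructor <;> omega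
lemma flip_disj {a b c : ℕ × ℕ} (ha : Valid a) (hb : Valid b) (hc : Valid c)
    (h1 : Sub b a) (h2 : Sub c a) (h : Disj b c) : Disj (flip a b) (flip a c) := by
  unfold Valid Sub Disj flip at *; simp at *; omega
lemma sub_disj_disj {x b c : ℕ × ℕ} (h1 : Sub b x) (h2 : Disj c x) : Disj b c := by
  unfold Sub Disj at *; omega
lemma disj_of_sub_disj {x b c : ℕ × ℕ} (h1 : Sub c b) (h2 : Disj b x) : Disj c x := by
  unfold Sub Disj at *; omega
lemma not_sub_of_disj {b x : ℕ × ℕ} (hb : Valid b) (hx : Valid x) (h : Disj b x) :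
    ¬ Sub b x := by unfold Valid Sub Disj at *; omega

lemma relator_one {α : Type*} {rels : Set (FreeGroup α)} {r : FreeGroup α} (h : r ∈ rels) :
    PresentedGroup.mk rels r = 1 :=
  (QuotientGroup.eq_one_iff r).2 (Subgroup.subset_normalClosure h)

lemma rel1 {C : Set (ℕ × ℕ)} (a : ↥C) :
    (PresentedGroup.of a : PartialCactusGroup C) * PresentedGroup.of a = 1 := by
  have h : (FreeGroup.of a * FreeGroup.of a) ∈ cactusRels C := Or.inl ⟨a, rfl⟩
  have := relator_one h
  simpa [PresentedGroup.of, map_mul] using this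

lemma rel2 {C : Set (ℕ × ℕ)} (a b : ↥C) (hd : Disj a.1 b.1) :
    (PresentedGroup.of a : PartialCactusGroup C) * PresentedGroup.of b *
      (PresentedGroup.of a)⁻¹ * (PresentedGroup.of b)⁻¹ = 1 := by
  have h : (FreeGroup.of a * FreeGroup.of b * (FreeGroup.of a)⁻¹ * (FreeGroup.of b)⁻¹)
      ∈ cactusRels C := Or.inr (Or.inl ⟨a, b, hd, rfl⟩)
  have := relator_one h
  simpa [PresentedGroup.of, map_mul, map_inv] using this

lemma rel3 {C : Set (ℕ × ℕ)} (a b c : ↥C) (hs : Sub b.1 a.1)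
    (h1 : c.1.1 = a.1.1 + a.1.2 - b.1.2) (h2 : c.1.2 = a.1.1 + a.1.2 - b.1.1) :
    (PresentedGroup.of a : PartialCactusGroup C) * PresentedGroup.of b *
      (PresentedGroup.of a)⁻¹ * (PresentedGroup.of c)⁻¹ = 1 := by
  have h : (FreeGroup.of a * FreeGroup.of b * (FreeGroup.of a)⁻¹ * (FreeGroup.of c)⁻¹)
      ∈ cactusRels C := Or.inr (Or.inr ⟨a, b, c, hs.1, hs.2, h1, h2, rfl⟩)
  have := relator_one h
  simpa [PresentedGroup.of, map_mul, map_inv] using this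

def natMap {C' C : Set (ℕ × ℕ)} (h : C' ⊆ C) :
    PartialCactusGroup C' →* PartialCactusGroup C := by
  refine PresentedGroup.toGroup (f := fun a => PresentedGroup.of ⟨a.1, h a.2⟩) ?_
  rintro r (⟨a, rfl⟩ | ⟨a, b, hd, rfl⟩ | ⟨a, b, c, hs1, hs2, h1, h2, rfl⟩) <;>
    simp only [map_mul, map_inv, FreeGroup.lift_apply_of]
  · exact rel1 _
  · exact rel2 _ _ hd
  · exact rel3 _ _ _ ⟨hs1, hs2⟩ h1 h2

@[simp] lemma natMap_of {C' C : Set (ℕ × ℕ)} (h : C' ⊆ C) (a : ↥C') :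
    natMap h (PresentedGroup.of a) = PresentedGroup.of ⟨a.1, h a.2⟩ :=
  PresentedGroup.toGroup.of _

lemma natMap_comp_natMap {C'' C' C : Set (ℕ × ℕ)} (h1 : C'' ⊆ C') (h2 : C' ⊆ C) (g) :
    natMap h2 (natMap h1 g) = natMap (h1.trans h2) g := by
  have : (natMap h2).comp (natMap h1) = natMap (h1.trans h2) :=
    PresentedGroup.ext fun a => by simp
  exact DFunLike.congr_fun this g

/-! ### The one-step amalgam -/

structure Hyp (A : Set (ℕ × ℕ)) (x : ℕ × ℕ) : Prop where
  vA : ∀ b ∈ A, Valid b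
  vx : Valid x
  notMem : x ∉ A
  closed : ∀ b ∈ A, ∀ c ∈ A, Sub c b → flip b c ∈ A
  down : ∀ b ∈ A, ∀ c, Valid c → Sub c b → c ≠ b → c ∈ A
  nosup : ∀ b ∈ A, ¬ Sub x b
  subx : ∀ c, Valid c → Sub c x → c ≠ x → c ∈ A

variable {A : Set (ℕ × ℕ)} {x : ℕ × ℕ}

/-- the members of `A` nested in or disjoint from `x` -/
def core (A : Set (ℕ × ℕ)) (x : ℕ × ℕ) : Set (ℕ × ℕ) := {b | b ∈ A ∧ (Sub b x ∨ Disj b x)}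

lemma core_sub : core A x ⊆ A := fun _ hb => hb.1

lemma flip_mem_A (h : Hyp A x) {b : ℕ × ℕ} (hb : b ∈ A) (hs : Sub b x) : flip x b ∈ A := by
  refine h.subx _ (flip_valid h.vx (h.vA b hb) hs) (flip_sub h.vx (h.vA b hb) hs) ?_
  intro he
  exact h.notMem (flip_eq_top h.vx (h.vA b hb) hs he ▸ hb)

def flipIf (x b : ℕ × ℕ) : ℕ × ℕ := if Sub b x then flip x b else b

lemma flipIf_mem_core (h : Hyp A x) {b : ℕ × ℕ} (hb : b ∈ core A x) :
    flipIf x b ∈ core A x := by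
  unfold flipIf; split
  · next hs => exact ⟨flip_mem_A h hb.1 hs, Or.inl (flip_sub h.vx (h.vA b hb.1) hs)⟩
  · exact hb

lemma flipIf_flipIf (h : Hyp A x) {b : ℕ × ℕ} (hb : b ∈ core A x) :
    flipIf x (flipIf x b) = b := by
  unfold flipIf
  by_cases hs : Sub b x
  · rw [if_pos hs, if_pos (flip_sub h.vx (h.vA b hb.1) hs)]
    exact flip_flip h.vx (h.vA b hb.1) hs
  · rw [if_neg hs, if_neg hs]

lemma flipIf_disj (h : Hyp A x) {a b : ℕ × ℕ} (ha : a ∈ core A x) (hb : b ∈ core A x)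
    (hd : Disj a b) : Disj (flipIf x a) (flipIf x b) := by
  have hva := h.vA a ha.1; have hvb := h.vA b hb.1
  unfold flipIf
  by_cases hsa : Sub a x <;> by_cases hsb : Sub b x
  · rw [if_pos hsa, if_pos hsb]; exact flip_disj h.vx hva hvb hsa hsb hd
  · rw [if_pos hsa, if_neg hsb]
    have hdb : Disj b x := (hb.2.resolve_left hsb)
    exact sub_disj_disj (flip_sub h.vx hva hsa) hdb
  · rw [if_neg hsa, if_pos hsb]
    have hda : Disj a x := (ha.2.resolve_left hsa)
    have hx : Disj (flip x b) a := sub_disj_disj (flip_sub h.vx hvb hsb) hda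
    unfold Disj at *; omega
  · rw [if_neg hsa, if_neg hsb]; exact hd

/-- the three obligations for the flip automorphism on a nested triple -/
lemma flipIf_rel3 (h : Hyp A x) {a b c : ℕ × ℕ} (ha : a ∈ core A x) (hb : b ∈ core A x)
    (hc : c ∈ core A x) (hs : Sub b a)
    (h1 : c.1 = a.1 + a.2 - b.2) (h2 : c.2 = a.1 + a.2 - b.1) :
    Sub (flipIf x b) (flipIf x a) ∧
      (flipIf x c).1 = (flipIf x a).1 + (flipIf x a).2 - (flipIf x b).2 ∧
      (flipIf x c).2 = (flipIf x a).1 + (flipIf x a).2 - (flipIf x b).1 := by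
  have hva := h.vA a ha.1; have hvb := h.vA b hb.1; have hvc := h.vA c hc.1
  have hceq : c = flip a b := Prod.ext h1 h2
  by_cases hsa : Sub a x
  · have hsb : Sub b x := sub_trans hs hsa
    have hsc : Sub c x := sub_trans (hceq ▸ flip_sub hva hvb hs) hsa
    unfold flipIf
    rw [if_pos hsa, if_pos hsb, if_pos hsc]
    refine ⟨flip_mono hva hvb hs hsa, ?_⟩
    have key : flip (flip x a) (flip x b) = flip x c := by
      rw [hceq]; exact flip_flip_comp h.vx hva hvb hs hsa
    constructor
    · rw [← key]; rfl
    · rw [← key]; rfl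
  · have hda : Disj a x := ha.2.resolve_left hsa
    have hdb : Disj b x := disj_of_sub_disj hs hda
    have hdc : Disj c x := disj_of_sub_disj (hceq ▸ flip_sub hva hvb hs) hda
    unfold flipIf
    rw [if_neg hsa, if_neg (not_sub_of_disj hvb h.vx hdb), if_neg (not_sub_of_disj hvc h.vx hdc)]
    exact ⟨hs, h1, h2⟩

/-- the flip endomorphism of the core group -/
def Phi (h : Hyp A x) :
    PartialCactusGroup (core A x) →* PartialCactusGroup (core A x) := by
  refine PresentedGroup.toGroup
    (f := fun b => PresentedGroup.of ⟨flipIf x b.1, flipIf_mem_core h b.2⟩) ?_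
  rintro r (⟨a, rfl⟩ | ⟨a, b, hd, rfl⟩ | ⟨a, b, c, hs1, hs2, h1, h2, rfl⟩) <;>
    simp only [map_mul, map_inv, FreeGroup.lift_apply_of]
  · exact rel1 _
  · exact rel2 _ _ (flipIf_disj h a.2 b.2 hd)
  · obtain ⟨q1, q2, q3⟩ := flipIf_rel3 h a.2 b.2 c.2 ⟨hs1, hs2⟩ h1 h2
    exact rel3 _ _ _ q1 q2 q3

@[simp] lemma Phi_of (h : Hyp A x) (b : ↥(core A x)) :
    Phi h (PresentedGroup.of b) = PresentedGroup.of ⟨flipIf x b.1, flipIf_mem_core h b.2⟩ :=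
  PresentedGroup.toGroup.of _

lemma Phi_Phi (h : Hyp A x) (g : PartialCactusGroup (core A x)) : Phi h (Phi h g) = g := by
  have : (Phi h).comp (Phi h) = MonoidHom.id _ := by
    refine PresentedGroup.ext fun b => ?_
    simp only [MonoidHom.comp_apply, Phi_of, MonoidHom.id_apply]
    congr 1
    exact Subtype.ext (flipIf_flipIf h b.2)
  exact DFunLike.congr_fun this g

/-- the flip as an automorphism -/
def PhiAut (h : Hyp A x) : MulAut (PartialCactusGroup (core A x)) :=
  { toFun := Phi h
    invFun := Phi h
    left_inv := Phi_Phi h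
    right_inv := Phi_Phi h
    map_mul' := map_mul (Phi h) }

/-- the C2-action given by the flip -/
def psi (h : Hyp A x) :
    Multiplicative (ZMod 2) →* MulAut (PartialCactusGroup (core A x)) where
  toFun z := if (Multiplicative.toAdd z : ZMod 2) = 0 then 1 else PhiAut h
  map_one' := by simp
  map_mul' a b := by
    have key : PhiAut h * PhiAut h = 1 := by
      ext g
      exact Phi_Phi h g
    have hcases : ∀ u : ZMod 2, u = 0 ∨ u = 1 := by decide
    rcases hcases (Multiplicative.toAdd a) with ha | ha <;>
      rcases hcases (Multiplicative.toAdd b) with hb | hb <;>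
      simp [toAdd_mul, ha, hb, key, show (1 + 1 : ZMod 2) = 0 by decide]


/-! ### the semidirect product and pushout -/

/-- the Bool-indexed family of groups for the pushout -/
def fam (h : Hyp A x) : Bool → Type :=
  fun i => cond i (PartialCactusGroup (core A x) ⋊[psi h] Multiplicative (ZMod 2))
    (PartialCactusGroup A)

instance famGroup (h : Hyp A x) : ∀ i, Group (fam h i) := fun i => by
  cases i <;> dsimp [fam] <;> infer_instance

/-- the maps from the core group -/
def famMap (h : Hyp A x) : ∀ i : Bool, PartialCactusGroup (core A x) →* fam h i
  | false => natMap core_sub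
  | true => SemidirectProduct.inl

/-- the pushout -/
abbrev Push (h : Hyp A x) : Type := Monoid.PushoutI (famMap h)

/-- the image of the new generator -/
def tgen (h : Hyp A x) : (PartialCactusGroup (core A x) ⋊[psi h] Multiplicative (ZMod 2)) :=
  SemidirectProduct.inr (Multiplicative.ofAdd (1 : ZMod 2))

def tP (h : Hyp A x) : Push h := Monoid.PushoutI.of (φ := famMap h) true (tgen h)

lemma tP_sq (h : Hyp A x) : tP h * tP h = 1 := by
  rw [tP]; erw [← map_mul]
  have : tgen h * tgen h = 1 := by
    rw [tgen, ← map_mul]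
    have : (Multiplicative.ofAdd (1 : ZMod 2)) * (Multiplicative.ofAdd (1 : ZMod 2)) = 1 := by
      decide
    rw [this, map_one]
  erw [this, map_one]

lemma bridge (h : Hyp A x) (p : PartialCactusGroup (core A x)) :
    Monoid.PushoutI.of (φ := famMap h) false (natMap core_sub p) =
      Monoid.PushoutI.of (φ := famMap h) true (SemidirectProduct.inl p) := by
  have h1 := Monoid.PushoutI.of_comp_eq_base (φ := famMap h) false
  have h2 := Monoid.PushoutI.of_comp_eq_base (φ := famMap h) true
  have e1 := DFunLike.congr_fun h1 p
  have e2 := DFunLike.congr_fun h2 p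
  simp only [MonoidHom.comp_apply] at e1 e2
  exact (e1.trans e2.symm : _)

lemma conj_tP (h : Hyp A x) (p : PartialCactusGroup (core A x)) :
    tP h * Monoid.PushoutI.of (φ := famMap h) true (SemidirectProduct.inl p) * (tP h)⁻¹ =
      Monoid.PushoutI.of (φ := famMap h) true (SemidirectProduct.inl (Phi h p)) := by
  rw [tP]; erw [← map_inv, ← map_mul, ← map_mul]
  congr 1
  have haut := SemidirectProduct.inl_aut (φ := psi h) (Multiplicative.ofAdd (1 : ZMod 2)) p
  rw [map_inv] at haut
  rw [tgen]
  have hval : psi h (Multiplicative.ofAdd (1 : ZMod 2)) p = Phi h p := by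
    have : (Multiplicative.toAdd (Multiplicative.ofAdd (1 : ZMod 2)) : ZMod 2) ≠ 0 := by decide
    simp only [psi, MonoidHom.coe_mk, OneHom.coe_mk, if_neg this]
    rfl
  rw [← hval]
  exact haut.symm

/-- shorthand -/
def of0 (h : Hyp A x) : PartialCactusGroup A →* Push h :=
  Monoid.PushoutI.of (φ := famMap h) false

lemma of0_core (h : Hyp A x) {b : ℕ × ℕ} (hb : b ∈ core A x) :
    of0 h (PresentedGroup.of ⟨b, hb.1⟩) =
      Monoid.PushoutI.of (φ := famMap h) true
        (SemidirectProduct.inl (PresentedGroup.of ⟨b, hb⟩)) := by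
  have : (PresentedGroup.of ⟨b, hb.1⟩ : PartialCactusGroup A) =
      natMap core_sub (PresentedGroup.of ⟨b, hb⟩) := by
    rw [natMap_of]
  rw [this]
  exact bridge h _

lemma key_conj (h : Hyp A x) {b : ℕ × ℕ} (hb : b ∈ core A x) :
    tP h * of0 h (PresentedGroup.of ⟨b, hb.1⟩) * (tP h)⁻¹ =
      of0 h (PresentedGroup.of ⟨flipIf x b, (flipIf_mem_core h hb).1⟩) := by
  rw [of0_core h hb, conj_tP, Phi_of, of0_core h (flipIf_mem_core h hb)]

lemma mem_A_of_insert {a : ℕ × ℕ} (ha : a ∈ insert x A) (hne : a ≠ x) : a ∈ A :=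
  (Set.mem_insert_iff.1 ha).resolve_left hne

/-- the function defining alpha -/
noncomputable def alphaFun (h : Hyp A x) : ↥(insert x A) → Push h := fun a =>
  if hax : a.1 = x then tP h
  else of0 h (PresentedGroup.of ⟨a.1, mem_A_of_insert a.2 hax⟩)


lemma conj_gen (h : Hyp A x) {b : ℕ × ℕ} (hb : b ∈ core A x) (hbA : b ∈ A) {c : ℕ × ℕ}
    (hcA : c ∈ A) (hc : flipIf x b = c) :
    tP h * of0 h (PresentedGroup.of ⟨b, hbA⟩) * (tP h)⁻¹ =
      of0 h (PresentedGroup.of ⟨c, hcA⟩) := by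
  subst hc
  exact key_conj h hb

lemma comm_tP (h : Hyp A x) {b : ℕ × ℕ} (hb : b ∈ core A x) (hbA : b ∈ A)
    (hfix : flipIf x b = b) :
    tP h * of0 h (PresentedGroup.of ⟨b, hbA⟩) =
      of0 h (PresentedGroup.of ⟨b, hbA⟩) * tP h := by
  have hc := conj_gen h hb hbA hbA hfix
  calc tP h * of0 h (PresentedGroup.of ⟨b, hbA⟩)
      = tP h * of0 h (PresentedGroup.of ⟨b, hbA⟩) * (tP h)⁻¹ * tP h := by group
    _ = _ := by rw [hc]

lemma alpha_check (h : Hyp A x) :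
    ∀ r ∈ cactusRels (insert x A), FreeGroup.lift (alphaFun h) r = 1 := by
  rintro r (⟨a, rfl⟩ | ⟨a, b, hd, rfl⟩ | ⟨a, b, c, hs1, hs2, h1, h2, rfl⟩) <;>
    simp only [map_mul, map_inv, FreeGroup.lift_apply_of, alphaFun]
  -- (j1)
  · by_cases hax : a.1 = x
    · rw [dif_pos hax]; exact tP_sq h
    · rw [dif_neg hax, ← map_mul, rel1, map_one]
  -- (j2)
  · by_cases hax : a.1 = x
    · by_cases hbx : b.1 = x
      · exfalso
        rw [hax, hbx] at hd
        have := h.vx; unfold Valid at this; omega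
      · rw [dif_pos hax, dif_neg hbx]
        have hbA : b.1 ∈ A := mem_A_of_insert b.2 hbx
        have hdbx : Disj b.1 x := by rw [hax] at hd; unfold Disj; omega
        have hbcore : b.1 ∈ core A x := ⟨hbA, Or.inr hdbx⟩
        have hfix : flipIf x b.1 = b.1 := if_neg (not_sub_of_disj (h.vA _ hbA) h.vx hdbx)
        rw [conj_gen h hbcore hbA hbA hfix]
        group
    · by_cases hbx : b.1 = x
      · rw [dif_neg hax, dif_pos hbx]
        have haA : a.1 ∈ A := mem_A_of_insert a.2 hax
        have hdax : Disj a.1 x := by rw [hbx] at hd; unfold Disj; omega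
        have hacore : a.1 ∈ core A x := ⟨haA, Or.inr hdax⟩
        have hfix : flipIf x a.1 = a.1 := if_neg (not_sub_of_disj (h.vA _ haA) h.vx hdax)
        have hcomm := comm_tP h hacore haA hfix
        rw [← hcomm]
        group
      · rw [dif_neg hax, dif_neg hbx]
        simp only [← map_inv, ← map_mul]
        have hr := rel2 (C := A) ⟨a.1, mem_A_of_insert a.2 hax⟩ ⟨b.1, mem_A_of_insert b.2 hbx⟩
          (show Disj a.1 b.1 from hd)
        rw [hr, map_one]
  -- (j3)
  · have hsub : Sub b.1 a.1 := ⟨hs1, hs2⟩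
    by_cases hax : a.1 = x
    · by_cases hbx : b.1 = x
      · have hcx : c.1 = x := by
          rw [hax, hbx] at h1 h2
          have := h.vx; unfold Valid at this
          apply Prod.ext <;> omega
        rw [dif_pos hax, dif_pos hbx, dif_pos hcx]
        group
      · have hbA : b.1 ∈ A := mem_A_of_insert b.2 hbx
        have hsbx : Sub b.1 x := by rw [hax] at hsub; exact hsub
        have hbcore : b.1 ∈ core A x := ⟨hbA, Or.inl hsbx⟩
        have hcval : c.1 = flip x b.1 := by
          rw [hax] at h1 h2
          exact Prod.ext h1 h2
        have hcx : c.1 ≠ x := by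
          intro he
          exact hbx (flip_eq_top h.vx (h.vA _ hbA) hsbx (hcval ▸ he))
        have hcA : c.1 ∈ A := mem_A_of_insert c.2 hcx
        have hfix : flipIf x b.1 = c.1 := by rw [flipIf, if_pos hsbx, hcval]
        rw [dif_pos hax, dif_neg hbx, dif_neg hcx]
        rw [conj_gen h hbcore hbA hcA hfix]
        group
    · have haA : a.1 ∈ A := mem_A_of_insert a.2 hax
      have hbx : b.1 ≠ x := by
        intro he
        rw [he] at hsub
        exact h.nosup a.1 haA hsub
      have hcval : c.1 = flip a.1 b.1 := Prod.ext h1 h2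
      have hcx : c.1 ≠ x := by
        intro he
        have hsca : Sub c.1 a.1 := by
          rw [hcval]
          exact flip_sub (h.vA _ haA) (h.vA _ (mem_A_of_insert b.2 hbx)) hsub
        rw [he] at hsca
        exact h.nosup a.1 haA hsca
      rw [dif_neg hax, dif_neg hbx, dif_neg hcx]
      simp only [← map_inv, ← map_mul]
      have hr := rel3 (C := A) ⟨a.1, mem_A_of_insert a.2 hax⟩ ⟨b.1, mem_A_of_insert b.2 hbx⟩
        ⟨c.1, mem_A_of_insert c.2 hcx⟩ hsub h1 h2
      rw [hr, map_one]

/-- the evaluation homomorphism to the pushout -/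
noncomputable def alpha (h : Hyp A x) : PartialCactusGroup (insert x A) →* Push h :=
  PresentedGroup.toGroup (alpha_check h)

lemma alpha_of (h : Hyp A x) (z : ↥(insert x A)) :
    alpha h (PresentedGroup.of z) = alphaFun h z :=
  PresentedGroup.toGroup.of _

lemma alpha_comp (h : Hyp A x) :
    (alpha h).comp (natMap (Set.subset_insert x A)) = of0 h := by
  refine PresentedGroup.ext fun b => ?_
  simp only [MonoidHom.comp_apply, natMap_of, alpha_of]
  have hbx : b.1 ≠ x := fun he => h.notMem (he ▸ b.2)
  rw [alphaFun, dif_neg hbx]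

/-- The key step: adding one maximal generator is injective, provided the core embeds. -/
lemma step (h : Hyp A x)
    (hcore : Function.Injective (natMap (core_sub : core A x ⊆ A))) :
    Function.Injective (natMap (Set.subset_insert x A) :
      PartialCactusGroup A →* PartialCactusGroup (insert x A)) := by
  have hof : Function.Injective (of0 h) := by
    apply Monoid.PushoutI.of_injective
    intro i
    cases i
    · exact hcore
    · exact SemidirectProduct.inl_injective
  rw [← alpha_comp h] at hof
  rw [MonoidHom.coe_comp] at hof
  exact Function.Injective.of_comp hof


/-! ### The tower induction -/

structure Good (T₀ T : Set (ℕ × ℕ)) : Prop where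
  subset : T₀ ⊆ T
  valid : ∀ b ∈ T, Valid b
  closed : ∀ b ∈ T, ∀ c ∈ T, Sub c b → flip b c ∈ T
  down : ∀ b ∈ T, ∀ c, Valid c → Sub c b → c ≠ b → c ∈ T
  nosup : ∀ a ∈ T, a ∉ T₀ → ∀ b ∈ T₀, Sub a b → a = b

lemma inj_of_eq {C' C D : Set (ℕ × ℕ)} (hCD : C = D) (h1 : C' ⊆ C) (h2 : C' ⊆ D)
    (hinj : Function.Injective (natMap h1)) : Function.Injective (natMap h2) := by
  subst hCD; exact hinj

lemma tower_base {T₀ T : Set (ℕ × ℕ)} (g : Good T₀ T) (hTT : T ⊆ T₀) :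
    Function.Injective (natMap g.subset) := by
  have he : T₀ = T := Set.Subset.antisymm g.subset hTT
  subst he
  have : natMap g.subset = MonoidHom.id _ := PresentedGroup.ext fun b => rfl
  rw [this]
  exact fun _ _ hh => hh

lemma remove_max {T₀ T : Set (ℕ × ℕ)} (g : Good T₀ T) {a : ℕ × ℕ} (ha : a ∈ T)
    (ha0 : a ∉ T₀) (hmax : ∀ z ∈ T, z ∉ T₀ → z.2 - z.1 ≤ a.2 - a.1) :
    Hyp (T \ {a}) a ∧ Good T₀ (T \ {a}) := by
  have hamax : ∀ b ∈ T, Sub a b → a = b := by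
    intro b hb hsub
    by_contra hne
    have hlt := sub_len_lt (g.valid a ha) (g.valid b hb) hsub hne
    by_cases hb0 : b ∈ T₀
    · exact hne (g.nosup a ha ha0 b hb0 hsub)
    · have := hmax b hb hb0
      omega
  constructor
  · refine ⟨fun b hb => g.valid b hb.1, g.valid a ha, by simp, ?_, ?_, ?_, ?_⟩
    · intro b hb c hc hsub
      refine ⟨g.closed b hb.1 c hc.1 hsub, ?_⟩
      intro he
      have hfs : Sub (flip b c) b := flip_sub (g.valid b hb.1) (g.valid c hc.1) hsub
      rw [he] at hfs
      exact hb.2 (hamax b hb.1 hfs).symm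
    · intro b hb c hvc hsub hne
      refine ⟨g.down b hb.1 c hvc hsub hne, ?_⟩
      intro he
      rw [he] at hsub hne
      exact hb.2 (hamax b hb.1 hsub).symm
    · intro b hb hsub
      exact hb.2 (hamax b hb.1 hsub).symm
    · intro c hvc hsub hne
      exact ⟨g.down a ha c hvc hsub hne, hne⟩
  · refine ⟨?_, fun b hb => g.valid b hb.1, ?_, ?_, ?_⟩
    · intro b hb
      exact ⟨g.subset hb, fun he => ha0 (he ▸ hb)⟩
    · intro b hb c hc hsub
      refine ⟨g.closed b hb.1 c hc.1 hsub, ?_⟩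
      intro he
      have hfs : Sub (flip b c) b := flip_sub (g.valid b hb.1) (g.valid c hc.1) hsub
      rw [he] at hfs
      exact hb.2 (hamax b hb.1 hfs).symm
    · intro b hb c hvc hsub hne
      refine ⟨g.down b hb.1 c hvc hsub hne, ?_⟩
      intro he
      rw [he] at hsub hne
      exact hb.2 (hamax b hb.1 hsub).symm
    · intro z hz hz0 b hb hsub
      exact g.nosup z hz.1 hz0 b hb hsub

lemma tower (N : ℕ)
    (oracle : ∀ (A : Set (ℕ × ℕ)) (x : ℕ × ℕ), Hyp A x → A.Finite → A.ncard < N →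
      Function.Injective (natMap (Set.subset_insert x A))) :
    ∀ (k : ℕ) (T₀ T : Set (ℕ × ℕ)), T.Finite → T.ncard ≤ N → (T \ T₀).ncard ≤ k →
      ∀ (g : Good T₀ T), Function.Injective (natMap g.subset) := by
  intro k
  induction k with
  | zero =>
    intro T₀ T hfin hN hk g
    have hdiff : T \ T₀ = ∅ :=
      (Set.ncard_eq_zero (hs := hfin.diff (t := T₀))).1 (le_antisymm hk (Nat.zero_le _))
    refine tower_base g fun z hz => ?_
    by_contra h0
    have : z ∈ T \ T₀ := ⟨hz, h0⟩
    rw [hdiff] at this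
    exact this
  | succ k ih =>
    intro T₀ T hfin hN hk g
    by_cases hempty : T \ T₀ = ∅
    · refine tower_base g fun z hz => ?_
      by_contra h0
      have : z ∈ T \ T₀ := ⟨hz, h0⟩
      rw [hempty] at this
      exact this
    · obtain ⟨a, haT, hamax0⟩ := Set.Finite.exists_maximalFor (fun z => z.2 - z.1) (T \ T₀)
        (hfin.diff (t := T₀)) (Set.nonempty_iff_ne_empty.2 hempty)
      have hmax : ∀ z ∈ T, z ∉ T₀ → z.2 - z.1 ≤ a.2 - a.1 := by
        intro z hz hz0
        by_contra hlt
        have : z.2 - z.1 ≤ a.2 - a.1 :=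
          hamax0 (show z ∈ T \ T₀ from ⟨hz, hz0⟩) (by show a.2 - a.1 ≤ z.2 - z.1; omega)
        omega
      obtain ⟨hyp', good'⟩ := remove_max g haT.1 haT.2 hmax
      have hne1 : 1 ≤ T.ncard := (Set.ncard_pos hfin).2 ⟨a, haT.1⟩
      have hcard : (T \ {a}).ncard = T.ncard - 1 :=
        Set.ncard_diff_singleton_of_mem haT.1
      have h1 : Function.Injective (natMap good'.subset) := by
        refine ih T₀ (T \ {a}) hfin.diff (by omega) ?_ good'
        have heq : (T \ {a}) \ T₀ = (T \ T₀) \ {a} := by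
          ext z; simp only [Set.mem_diff, Set.mem_singleton_iff]; tauto
        rw [heq, Set.ncard_diff_singleton_of_mem haT]
        have : 1 ≤ (T \ T₀).ncard := (Set.ncard_pos (hfin.diff (t := T₀))).2 ⟨a, haT⟩
        omega
      have h2 : Function.Injective (natMap (Set.subset_insert a (T \ {a}))) :=
        oracle (T \ {a}) a hyp' hfin.diff (by omega)
      have heqT : insert a (T \ {a}) = T := by
        rw [Set.insert_diff_singleton, Set.insert_eq_self.2 haT.1]
      have h2' : Function.Injective
          (natMap (show T \ {a} ⊆ T from Set.diff_subset)) :=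
        inj_of_eq heqT _ _ h2
      intro u v huv
      apply h1
      apply h2'
      rw [natMap_comp_natMap, natMap_comp_natMap]
      exact huv

lemma emb : ∀ (N : ℕ) (A : Set (ℕ × ℕ)) (x : ℕ × ℕ), A.Finite → A.ncard ≤ N → Hyp A x →
    Function.Injective (natMap (Set.subset_insert x A)) := by
  intro N
  induction N with
  | zero =>
    intro A x hfin hN h
    apply step h
    have g : Good (core A x) A := ⟨core_sub, h.vA, h.closed, h.down, ?_⟩
    · exact tower 0 (fun A' x' _ _ hlt => absurd hlt (by omega)) (A \ core A x).ncard
        (core A x) A hfin hN le_rfl g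
    · intro z hz hz0 b hb hsub
      exfalso
      apply hz0
      refine ⟨hz, ?_⟩
      rcases hb.2 with hbx | hbx
      · exact Or.inl (sub_trans hsub hbx)
      · exact Or.inr (disj_of_sub_disj hsub hbx)
  | succ n ih =>
    intro A x hfin hN h
    apply step h
    have g : Good (core A x) A := ⟨core_sub, h.vA, h.closed, h.down, ?_⟩
    · exact tower A.ncard (fun A' x' h' hf' hlt => ih A' x' hf' (by omega) h')
        (A \ core A x).ncard (core A x) A hfin le_rfl le_rfl g
    · intro z hz hz0 b hb hsub
      exfalso
      apply hz0
      refine ⟨hz, ?_⟩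
      rcases hb.2 with hbx | hbx
      · exact Or.inl (sub_trans hsub hbx)
      · exact Or.inr (disj_of_sub_disj hsub hbx)


/-! ### the retraction killing short generators -/

lemma slice_sub_slice2 {n i j : ℕ} : sliceSet n i j ⊆ sliceSet n 2 j := by
  rintro ⟨p, q⟩ hpq
  obtain ⟨⟨w1, w2, w3⟩, hb1, hb2⟩ := hpq
  exact ⟨⟨w1, w2, w3⟩, by omega, hb2⟩

lemma retr_check (n i j : ℕ) :
    ∀ r ∈ cactusRels (sliceSet n 2 j), FreeGroup.lift
      (fun (a : ↥(sliceSet n 2 j)) =>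
        if hc : i ≤ a.1.2 - a.1.1 + 1 then
          (PresentedGroup.of ⟨a.1, a.2.1, hc, a.2.2.2⟩ : PartialCactusGroup (sliceSet n i j))
        else 1) r = 1 := by
  rintro r (⟨a, rfl⟩ | ⟨a, b, hd, rfl⟩ | ⟨a, b, c, hs1, hs2, h1, h2, rfl⟩) <;>
    simp only [map_mul, map_inv, FreeGroup.lift_apply_of]
  · by_cases hca : i ≤ a.1.2 - a.1.1 + 1
    · rw [dif_pos hca]; exact rel1 _
    · rw [dif_neg hca]; simp
  · by_cases hca : i ≤ a.1.2 - a.1.1 + 1 <;> by_cases hcb : i ≤ b.1.2 - b.1.1 + 1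
    · rw [dif_pos hca, dif_pos hcb]
      exact rel2 _ _ hd
    · rw [dif_pos hca, dif_neg hcb]; simp
    · rw [dif_neg hca, dif_pos hcb]; simp
    · rw [dif_neg hca, dif_neg hcb]; simp
  · have hlenc : c.1.2 - c.1.1 = b.1.2 - b.1.1 := by
      have hav := a.2.1; have hbv := b.2.1
      obtain ⟨q1, q2, q3⟩ := hav; obtain ⟨r1, r2, r3⟩ := hbv
      omega
    by_cases hca : i ≤ a.1.2 - a.1.1 + 1
    · by_cases hcb : i ≤ b.1.2 - b.1.1 + 1
      · have hcc : i ≤ c.1.2 - c.1.1 + 1 := by omega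
        rw [dif_pos hca, dif_pos hcb, dif_pos hcc]
        exact rel3 _ _ _ ⟨hs1, hs2⟩ h1 h2
      · have hcc : ¬ i ≤ c.1.2 - c.1.1 + 1 := by omega
        rw [dif_pos hca, dif_neg hcb, dif_neg hcc]; simp
    · have hcb : ¬ i ≤ b.1.2 - b.1.1 + 1 := by
        have hav := a.2.1; have hbv := b.2.1
        obtain ⟨q1, q2, q3⟩ := hav; obtain ⟨r1, r2, r3⟩ := hbv
        omega
      have hcc : ¬ i ≤ c.1.2 - c.1.1 + 1 := by omega
      rw [dif_neg hca, dif_neg hcb, dif_neg hcc]; simp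

/-- the retraction killing the short generators -/
noncomputable def retr (n i j : ℕ) :
    PartialCactusGroup (sliceSet n 2 j) →* PartialCactusGroup (sliceSet n i j) :=
  PresentedGroup.toGroup (retr_check n i j)

lemma lower_inj (n i j : ℕ) :
    Function.Injective (natMap (slice_sub_slice2 : sliceSet n i j ⊆ sliceSet n 2 j)) := by
  have hcomp : (retr n i j).comp (natMap slice_sub_slice2) = MonoidHom.id _ := by
    refine PresentedGroup.ext fun b => ?_
    simp only [MonoidHom.comp_apply, natMap_of, MonoidHom.id_apply]
    rw [retr, PresentedGroup.toGroup.of, dif_pos b.2.2.1]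
  intro u v huv
  have := congrArg (retr n i j) huv
  calc u = (retr n i j).comp (natMap slice_sub_slice2) u := by rw [hcomp]; rfl
    _ = (retr n i j).comp (natMap slice_sub_slice2) v := this
    _ = v := by rw [hcomp]; rfl

/-! ### assembling -/

lemma cactus_finite (n : ℕ) : (cactusSet n).Finite := by
  apply (Set.finite_Icc ((1 : ℕ), (1 : ℕ)) ((n : ℕ), n)).subset
  rintro ⟨p, q⟩ hpq
  obtain ⟨w1, w2, w3⟩ := hpq
  simp only [Set.mem_Icc, Prod.mk_le_mk]
  omega

lemma slice2_sub_cactus {n j : ℕ} : sliceSet n 2 j ⊆ cactusSet n := fun _ h => h.1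

lemma good_slice2 (n j : ℕ) : Good (sliceSet n 2 j) (cactusSet n) := by
  refine ⟨slice2_sub_cactus, ?_, ?_, ?_, ?_⟩
  · rintro ⟨p, q⟩ ⟨w1, w2, w3⟩
    exact ⟨w1, w2⟩
  · rintro ⟨p, q⟩ ⟨w1, w2, w3⟩ ⟨p', q'⟩ ⟨v1, v2, v3⟩ ⟨u1, u2⟩
    refine ⟨?_, ?_, ?_⟩ <;> simp only [flip] <;> omega
  · rintro ⟨p, q⟩ ⟨w1, w2, w3⟩ ⟨p', q'⟩ ⟨v1, v2⟩ ⟨u1, u2⟩ hne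
    exact ⟨v1, v2, by omega⟩
  · rintro ⟨p, q⟩ ⟨w1, w2, w3⟩ hz ⟨p', q'⟩ ⟨⟨v1, v2, v3⟩, hb1, hb2⟩ ⟨u1, u2⟩
    exfalso
    apply hz
    refine ⟨⟨w1, w2, w3⟩, by omega, by omega⟩

lemma upper_inj (n j : ℕ) :
    Function.Injective (natMap (slice2_sub_cactus : sliceSet n 2 j ⊆ cactusSet n)) := by
  have hfin := cactus_finite n
  have g := good_slice2 n j
  have := tower (cactusSet n).ncard
    (fun A x h hf _ => emb A.ncard A x hf le_rfl h)
    ((cactusSet n \ sliceSet n 2 j).ncard) (sliceSet n 2 j) (cactusSet n)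
    hfin le_rfl le_rfl g
  exact this

end CactusAux


/-- For all `2 ≤ i ≤ j ≤ n`, the homomorphism `J_n^{i,j} → J_n`,
`s_{p,q} ↦ s_{p,q}`, is injective. -/
theorem slice_embeds_in_cactus (n i j : ℕ) (h2 : 2 ≤ i) (hij : i ≤ j) (hjn : j ≤ n) :
    ∃ φ : SliceCactusGroup n i j →* CactusGroup n,
      (∀ (pq : ℕ × ℕ) (h : pq ∈ sliceSet n i j),
        φ (PresentedGroup.of ⟨pq, h⟩) = PresentedGroup.of ⟨pq, h.1⟩) ∧
      Function.Injective φ := by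
  refine ⟨(CactusAux.natMap CactusAux.slice2_sub_cactus).comp
    (CactusAux.natMap CactusAux.slice_sub_slice2), ?_, ?_⟩
  · intro pq h
    simp only [MonoidHom.comp_apply, CactusAux.natMap_of]
  · intro u v huv
    exact CactusAux.lower_inj n i j (CactusAux.upper_inj n j huv)
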